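/- For fixed positive reals N₀, n₁, t, the function f(w) = (N₀ + w²n₁)/(N₀ + w·n₁)² + (w²n₁²·t)/(N₀ + w·n₁)² over w ≥ 0 attains its minimum at w* = 1/(1 + t·n₁). -/

import Mathlib

/-- For fixed positive reals `N₀, n₁, t`, the function
`f(w) = (N₀ + w²n₁)/(N₀ + w n₁)² + (w²n₁²t)/(N₀ + w n₁)²` over `w ≥ 0`
attains its minimum at `w* = 1/(1 + t n₁)`. -/
theorem single_source_optimal_weight
    (N₀ n₁ t : ℝ) (hN₀ : 0 < N₀) (hn₁ : 0 < n₁) (ht : 0 < t)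
    (f : ℝ → ℝ)
    (hf : ∀ w, f w = (N₀ + w ^ 2 * n₁) / (N₀ + w * n₁) ^ 2
        + (w ^ 2 * n₁ ^ 2 * t) / (N₀ + w * n₁) ^ 2) :
    ∀ w, 0 ≤ w → f (1 / (1 + t * n₁)) ≤ f w := by
  intro w hw
  have ha : 0 < 1 + t * n₁ := by positivity
  have h1 : 0 < N₀ + w * n₁ := by positivity
  have h2 : 0 < N₀ + (1 / (1 + t * n₁)) * n₁ := by positivity
  rw [hf, hf, ← add_div, ← add_div,
    div_le_div_iff₀ (by positivity) (by positivity)]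
  have key : 0 ≤ N₀ * n₁ * (1 - (1 + t * n₁) * w) ^ 2 := by positivity
  field_simp
  nlinarith [mul_nonneg key (show (0:ℝ) ≤ N₀ * (1 + t * n₁) + n₁ by positivity)]
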